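/- For every integer m ≥ 3, let H_m be the graph obtained from a complete graph K on m − 1 vertices and m pairwise disjoint triangles by joining every vertex of each triangle to every vertex of K. Then H_m admits no {K₂, C_{2i+1} | i ≥ 2}-factor and its isolated toughness equals I(H_m) = (3m − 1)/m. -/

import Mathlib

open SimpleGraph

variable {V : Type*}

/-- The number of connected components of `G - S`, the subgraph of `G`
induced on the complement of the vertex set `S`. -/
noncomputable def compCount (G : SimpleGraph V) (S : Set V) : ℕ :=
  Nat.card (G.induce (Sᶜ : Set V)).ConnectedComponent

/-- The number of isolated vertices of `G - S`, the subgraph of `G`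
induced on the complement of the vertex set `S`. -/
noncomputable def isoCount (G : SimpleGraph V) (S : Set V) : ℕ :=
  {v : V | v ∉ S ∧ ∀ w : V, G.Adj v w → w ∈ S}.ncard

/-- The neighbourhood `N_G(Y)` of a set of vertices `Y`. -/
def nbhd (G : SimpleGraph V) (Y : Set V) : Set V := {v : V | ∃ y ∈ Y, G.Adj y v}

/-- `G` has a spanning subgraph each of whose connected components is
isomorphic to `K₂` or to an odd cycle `C_{2i+1}` with `i ≥ 2`. -/
def HasK2OddCycleFactor (G : SimpleGraph V) : Prop :=
  ∃ F : SimpleGraph V, F ≤ G ∧ ∀ c : F.ConnectedComponent,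
    Nonempty (F.induce c.supp ≃g (⊤ : SimpleGraph (Fin 2))) ∨
    ∃ i : ℕ, 2 ≤ i ∧ Nonempty (F.induce c.supp ≃g cycleGraph (2 * i + 1))

/-- The toughness `t(G)`: the minimum of `|S| / c(G - S)` over vertex sets `S`
with `c(G - S) ≥ 2`. -/
noncomputable def toughness (G : SimpleGraph V) : ℝ :=
  sInf {x : ℝ | ∃ S : Set V, 2 ≤ compCount G S ∧ x = (S.ncard : ℝ) / (compCount G S : ℝ)}

/-- The isolated toughness `I(G)`: the minimum of `|S| / iso(G - S)` over vertex
sets `S` with `iso(G - S) ≥ 2`. -/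
noncomputable def isoToughness (G : SimpleGraph V) : ℝ :=
  sInf {x : ℝ | ∃ S : Set V, 2 ≤ isoCount G S ∧ x = (S.ncard : ℝ) / (isoCount G S : ℝ)}

/-- The variant isolated toughness `I'(G)`: the minimum of `|S| / (iso(G - S) - 1)`
over vertex sets `S` with `iso(G - S) ≥ 2`. -/
noncomputable def isoToughness' (G : SimpleGraph V) : ℝ :=
  sInf {x : ℝ | ∃ S : Set V, 2 ≤ isoCount G S ∧ x = (S.ncard : ℝ) / ((isoCount G S : ℝ) - 1)}

/-- The binding number `bind(G)`: the minimum of `|N_G(Y)| / |Y|` over nonempty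
vertex sets `Y` with `N_G(Y) ≠ V(G)`. -/
noncomputable def bindingNumber (G : SimpleGraph V) : ℝ :=
  sInf {x : ℝ | ∃ Y : Set V, Y.Nonempty ∧ nbhd G Y ≠ Set.univ ∧
    x = ((nbhd G Y).ncard : ℝ) / (Y.ncard : ℝ)}

/-- `G_m`: the complete graph on `m - 1` vertices together with `m` independent
vertices each joined to every vertex of the complete graph. -/
def Gm (m : ℕ) : SimpleGraph (Fin (m - 1) ⊕ Fin m) where
  Adj x y := x ≠ y ∧ ¬(x.isRight ∧ y.isRight)
  symm := ⟨fun x y ⟨h1, h2⟩ => ⟨h1.symm, fun ⟨a, b⟩ => h2 ⟨b, a⟩⟩⟩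
  loopless := ⟨fun x ⟨h, _⟩ => h rfl⟩

/-- `H_m`: the complete graph on `m - 1` vertices together with `m` pairwise
disjoint triangles, every vertex of each triangle joined to every vertex of the
complete graph. -/
def Hm (m : ℕ) : SimpleGraph (Fin (m - 1) ⊕ (Fin m × Fin 3)) where
  Adj x y := x ≠ y ∧ ∀ p q : Fin m × Fin 3, x = Sum.inr p → y = Sum.inr q → p.1 = q.1
  symm := ⟨fun x y ⟨h1, h2⟩ => ⟨h1.symm, fun p q hp hq => (h2 q p hq hp).symm⟩⟩
  loopless := ⟨fun x ⟨h, _⟩ => h rfl⟩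

/-- `B` is a connected set of vertices of `G` with no cut vertex of the induced graph. -/
def NoCutConn (G : SimpleGraph V) (B : Set V) : Prop :=
  (G.induce B).Connected ∧ ∀ v ∈ B, B = {v} ∨ (G.induce (B \ {v})).Connected

/-- `B` is (the vertex set of) a block of `G`: a maximal connected subgraph
without a cut vertex. -/
def IsBlock (G : SimpleGraph V) (B : Set V) : Prop :=
  NoCutConn G B ∧ ∀ C : Set V, B ⊆ C → NoCutConn G C → B = C

/-- A triangular-cactus: a connected graph each of whose blocks is a triangle. -/
def IsTriangularCactus (G : SimpleGraph V) : Prop :=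
  G.Connected ∧ ∀ B : Set V, IsBlock G B → Nonempty (G.induce B ≃g (⊤ : SimpleGraph (Fin 3)))


/- ------------------- auxiliary lemmas ------------------- -/

section AuxDeg
open Finset
variable {A : Type*} [Fintype A] {F : SimpleGraph A} [DecidableRel F.Adj]

private lemma iso_degree' {B C : Type*} [Fintype B] [Fintype C] {G : SimpleGraph B}
    {H : SimpleGraph C} [DecidableRel G.Adj] [DecidableRel H.Adj]
    (e : G ≃g H) (v : B) : G.degree v = H.degree (e v) := by
  rw [← card_neighborSet_eq_degree, ← card_neighborSet_eq_degree]
  exact Fintype.card_congr (e.mapNeighborSet v)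

private lemma cycle_degree' {n : ℕ} (hn : 3 ≤ n) (v : Fin n) :
    (cycleGraph n).degree v = 2 := by
  obtain ⟨k, rfl⟩ : ∃ k, n = k + 3 := ⟨n - 3, by omega⟩
  exact cycleGraph_degree_three_le

private lemma degree_induce_supp' (c : F.ConnectedComponent) (v : A) (hv : v ∈ c.supp)
    [Fintype ↑c.supp] [DecidableRel (F.induce c.supp).Adj] :
    (F.induce c.supp).degree ⟨v, hv⟩ = F.degree v := by
  rw [← card_neighborSet_eq_degree, ← card_neighborSet_eq_degree]
  apply Fintype.card_congr
  refine ⟨fun w => ⟨w.1.1, w.2⟩, fun w => ⟨⟨w.1, ?_⟩, w.2⟩, fun w => rfl, fun w => rfl⟩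
  · rw [ConnectedComponent.mem_supp_iff] at hv ⊢
    rw [← hv]
    exact (ConnectedComponent.connectedComponentMk_eq_of_adj w.2).symm

/-- Structure of components of a K2/odd-cycle factor. -/
private lemma comp_struct'
    (h : ∀ c : F.ConnectedComponent,
      Nonempty (F.induce c.supp ≃g (⊤ : SimpleGraph (Fin 2))) ∨
      ∃ i : ℕ, 2 ≤ i ∧ Nonempty (F.induce c.supp ≃g cycleGraph (2 * i + 1)))
    (c : F.ConnectedComponent) :
    (Nat.card c.supp = 2 ∧ ∀ v ∈ c.supp, F.degree v = 1) ∨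
    (5 ≤ Nat.card c.supp ∧ ∀ v ∈ c.supp, F.degree v = 2) := by
  haveI : Fintype ↑c.supp := Fintype.ofFinite _
  haveI : DecidableRel (F.induce c.supp).Adj := Classical.decRel _
  rcases h c with he | ⟨i, hi, he⟩ <;> obtain ⟨e⟩ := he
  · left
    constructor
    · rw [Nat.card_congr e.toEquiv]; simp [Nat.card_eq_fintype_card]
    · intro v hv
      rw [← degree_induce_supp' c v hv, iso_degree' e ⟨v, hv⟩, complete_graph_degree]
      simp
  · right
    constructor
    · rw [Nat.card_congr e.toEquiv]; simp [Nat.card_eq_fintype_card]; omega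
    · intro v hv
      rw [← degree_induce_supp' c v hv, iso_degree' e ⟨v, hv⟩, cycle_degree' (by omega)]

end AuxDeg

section AuxHm
open Finset

private lemma fin3_a : ∀ c : Fin 3, c + 1 ≠ c := by decide
private lemma fin3_b : ∀ c : Fin 3, c + 2 ≠ c := by decide
private lemma fin3_c : ∀ c : Fin 3, ¬ (c + 2 = c + 1) := by decide

variable {m : ℕ}

private lemma hm_adj_iff {x y : Fin (m-1) ⊕ (Fin m × Fin 3)} :
    (Hm m).Adj x y ↔ x ≠ y ∧ ∀ p q : Fin m × Fin 3, x = Sum.inr p → y = Sum.inr q → p.1 = q.1 :=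
  Iff.rfl

private lemma hm_adj_inl {a : Fin (m-1)} {v : Fin (m-1) ⊕ (Fin m × Fin 3)}
    (h : v ≠ Sum.inl a) : (Hm m).Adj (Sum.inl a) v :=
  hm_adj_iff.2 ⟨fun he => h he.symm, fun _ _ hp _ => by cases hp⟩

private lemma hm_adj_inr_inl (p : Fin m × Fin 3) (a : Fin (m-1)) :
    (Hm m).Adj (Sum.inr p) (Sum.inl a) :=
  hm_adj_iff.2 ⟨by simp, fun _ _ _ hq => by cases hq⟩

private lemma hm_adj_inr_inr {p q : Fin m × Fin 3} (hne : p ≠ q) (h1 : p.1 = q.1) :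
    (Hm m).Adj (Sum.inr p) (Sum.inr q) :=
  hm_adj_iff.2 ⟨by simpa using hne, fun p' q' hp hq => by
    cases Sum.inr_injective hp; cases Sum.inr_injective hq; exact h1⟩

private lemma iso_lower (hm : 3 ≤ m) (S : Set (Fin (m-1) ⊕ (Fin m × Fin 3)))
    (hS : 2 ≤ isoCount (Hm m) S) :
    (3 * (m : ℝ) - 1) / (m : ℝ) ≤ (S.ncard : ℝ) / (isoCount (Hm m) S : ℝ) := by
  classical
  set I : Set (Fin (m-1) ⊕ (Fin m × Fin 3)) :=
    {v | v ∉ S ∧ ∀ w, (Hm m).Adj v w → w ∈ S} with hI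
  have hIcard : 2 ≤ I.ncard := hS
  have hne : I.Nonempty := Set.nonempty_of_ncard_ne_zero (by omega)
  have hinr : ∀ v ∈ I, ∃ p, v = Sum.inr p := by
    rintro v ⟨hvS, hviso⟩
    cases v with
    | inr p => exact ⟨p, rfl⟩
    | inl a =>
      obtain ⟨u, huI, hune⟩ := Set.exists_ne_of_one_lt_ncard (s := I) (by omega) (Sum.inl a)
      exact absurd (hviso u (hm_adj_inl hune)) huI.1
  have htri : ∀ p q, Sum.inr p ∈ I → Sum.inr q ∈ I → p.1 = q.1 → p = q := by
    intro p q hp hq h1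
    by_contra hne'
    exact hq.1 (hp.2 _ (hm_adj_inr_inr hne' h1))
  -- I.ncard ≤ m
  have hkm : I.ncard ≤ m := by
    have hInj : Set.InjOn (Sum.elim (fun _ => (⟨0, by omega⟩ : Fin m)) Prod.fst) I := by
      rintro v hv w hw h
      obtain ⟨p, rfl⟩ := hinr v hv
      obtain ⟨q, rfl⟩ := hinr w hw
      simp only [Sum.elim_inr] at h
      rw [htri p q hv hw h]
    calc I.ncard = (Sum.elim (fun _ => (⟨0, by omega⟩ : Fin m)) Prod.fst '' I).ncard :=
          (Set.ncard_image_of_injOn hInj).symm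
      _ ≤ (Set.univ : Set (Fin m)).ncard := Set.ncard_le_ncard (Set.subset_univ _) (Set.toFinite _)
      _ = m := by rw [Set.ncard_univ]; simp
  -- S.ncard ≥ (m-1) + 2 * I.ncard
  have hScard : (m - 1) + (I.ncard + I.ncard) ≤ S.ncard := by
    set f1 : (Fin (m-1) ⊕ (Fin m × Fin 3)) → (Fin (m-1) ⊕ (Fin m × Fin 3)) :=
      Sum.elim Sum.inl (fun p => Sum.inr (p.1, p.2 + 1)) with hf1
    set f2 : (Fin (m-1) ⊕ (Fin m × Fin 3)) → (Fin (m-1) ⊕ (Fin m × Fin 3)) :=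
      Sum.elim Sum.inl (fun p => Sum.inr (p.1, p.2 + 2)) with hf2
    set A : Set (Fin (m-1) ⊕ (Fin m × Fin 3)) := Set.range Sum.inl with hA
    have hmate : ∀ p, Sum.inr p ∈ I → ∀ c, c ≠ p.2 → Sum.inr (p.1, c) ∈ S := by
      intro p hp c hc
      exact hp.2 _ (hm_adj_inr_inr (fun h => hc (congrArg Prod.snd h.symm)) rfl)
    have hsub : A ∪ (f1 '' I ∪ f2 '' I) ⊆ S := by
      rintro v (⟨b, rfl⟩ | (⟨w, hw, rfl⟩ | ⟨w, hw, rfl⟩))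
      · obtain ⟨u, hu⟩ := hne
        obtain ⟨p, rfl⟩ := hinr u hu
        exact hu.2 _ (hm_adj_inr_inl p b)
      · obtain ⟨p, rfl⟩ := hinr w hw
        exact hmate p hw _ (fin3_a p.2)
      · obtain ⟨p, rfl⟩ := hinr w hw
        exact hmate p hw _ (fin3_b p.2)
    have hd1 : Disjoint A (f1 '' I ∪ f2 '' I) := by
      rw [Set.disjoint_left]
      rintro v ⟨b, rfl⟩ (⟨w, hw, hv⟩ | ⟨w, hw, hv⟩)
      · obtain ⟨p, rfl⟩ := hinr w hw; simp [hf1] at hv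
      · obtain ⟨p, rfl⟩ := hinr w hw; simp [hf2] at hv
    have hd2 : Disjoint (f1 '' I) (f2 '' I) := by
      rw [Set.disjoint_left]
      rintro v ⟨w, hw, rfl⟩ ⟨w', hw', hv⟩
      obtain ⟨p, rfl⟩ := hinr w hw
      obtain ⟨q, rfl⟩ := hinr w' hw'
      simp only [hf1, hf2, Sum.elim_inr, Sum.inr.injEq, Prod.mk.injEq] at hv
      have := htri q p hw' hw hv.1
      subst this
      exact fin3_c q.2 hv.2
    have hi1 : Set.InjOn f1 I := by
      rintro v hv w hw h
      obtain ⟨p, rfl⟩ := hinr v hv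
      obtain ⟨q, rfl⟩ := hinr w hw
      simp only [hf1, Sum.elim_inr, Sum.inr.injEq, Prod.mk.injEq] at h
      have h2 : p.2 = q.2 := by omega
      simp [Sum.inr.injEq, Prod.ext_iff, h.1, h2]
    have hi2 : Set.InjOn f2 I := by
      rintro v hv w hw h
      obtain ⟨p, rfl⟩ := hinr v hv
      obtain ⟨q, rfl⟩ := hinr w hw
      simp only [hf2, Sum.elim_inr, Sum.inr.injEq, Prod.mk.injEq] at h
      have h2 : p.2 = q.2 := by omega
      simp [Sum.inr.injEq, Prod.ext_iff, h.1, h2]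
    have hcardA : A.ncard = m - 1 := by
      rw [hA, ← Set.image_univ, Set.ncard_image_of_injective _ Sum.inl_injective,
        Set.ncard_univ]
      simp
    calc (m-1) + (I.ncard + I.ncard)
        = (A ∪ (f1 '' I ∪ f2 '' I)).ncard := by
          rw [Set.ncard_union_eq hd1 (Set.toFinite _) (Set.toFinite _),
            Set.ncard_union_eq hd2 (Set.toFinite _) (Set.toFinite _),
            hcardA, Set.ncard_image_of_injOn hi1, Set.ncard_image_of_injOn hi2]
      _ ≤ S.ncard := Set.ncard_le_ncard hsub (Set.toFinite _)
  -- arithmetic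
  show (3 * (m : ℝ) - 1) / (m : ℝ) ≤ (S.ncard : ℝ) / (I.ncard : ℝ)
  have hk0 : (0:ℝ) < (I.ncard : ℝ) := by exact_mod_cast by omega
  have hm0 : (0:ℝ) < (m : ℝ) := by exact_mod_cast by omega
  rw [div_le_div_iff₀ hm0 hk0]
  have h1 : (1:ℕ) ≤ m := by omega
  have hcast : ((m - 1 + (I.ncard + I.ncard) : ℕ) : ℝ) ≤ (S.ncard : ℝ) := Nat.cast_le.mpr hScard
  rw [Nat.cast_add, Nat.cast_add, Nat.cast_sub h1] at hcast
  have hkmR : (I.ncard : ℝ) ≤ m := by exact_mod_cast hkm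
  have hk2R : (2:ℝ) ≤ (I.ncard : ℝ) := by exact_mod_cast hIcard
  push_cast at hcast
  have key : (0:ℝ) ≤ ((m:ℝ) - 1) * ((m:ℝ) - I.ncard) :=
    mul_nonneg (by linarith) (by linarith)
  nlinarith [key, mul_le_mul_of_nonneg_right hcast hm0.le]


private lemma iso_mem (hm : 3 ≤ m) :
    ∃ S : Set (Fin (m-1) ⊕ (Fin m × Fin 3)), 2 ≤ isoCount (Hm m) S ∧
      (3 * (m:ℝ) - 1) / (m:ℝ) = (S.ncard : ℝ) / (isoCount (Hm m) S : ℝ) := by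
  classical
  set R : Set (Fin (m-1) ⊕ (Fin m × Fin 3)) :=
    Set.range (fun j : Fin m => Sum.inr (j, (0 : Fin 3))) with hR
  have hinj : Function.Injective (fun j : Fin m => (Sum.inr (j, (0:Fin 3)) :
      Fin (m-1) ⊕ (Fin m × Fin 3))) := by
    intro a b h
    simpa using congrArg (fun v => Sum.elim (fun _ => a) Prod.fst v) h
  have hRcard : R.ncard = m := by
    rw [hR, ← Set.image_univ, Set.ncard_image_of_injective _ hinj, Set.ncard_univ]
    simp
  have hIR : {v | v ∉ Rᶜ ∧ ∀ w, (Hm m).Adj v w → w ∈ Rᶜ} = R := by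
    ext v
    constructor
    · rintro ⟨h1, _⟩
      simpa using h1
    · rintro ⟨j, rfl⟩
      refine ⟨fun h => h ⟨j, rfl⟩, ?_⟩
      rintro w hadj hwR
      obtain ⟨j', rfl⟩ := hwR
      have hj : j = j' := (hm_adj_iff.1 hadj).2 (j,0) (j',0) rfl rfl
      exact (hm_adj_iff.1 hadj).1 (by simp [hj])
  have hiso : isoCount (Hm m) Rᶜ = m := by
    rw [isoCount, hIR, hRcard]
  have hcompl : Rᶜ.ncard = 3 * m - 1 := by
    have h := Set.ncard_add_ncard_compl R
    have hV : Nat.card (Fin (m-1) ⊕ (Fin m × Fin 3)) = (m-1) + m * 3 := by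
      simp [Nat.card_eq_fintype_card]
    rw [hV, hRcard] at h
    omega
  refine ⟨Rᶜ, by omega, ?_⟩
  rw [hiso, hcompl]
  have h1 : (1:ℕ) ≤ 3 * m := by omega
  rw [Nat.cast_sub h1]
  push_cast
  ring

private lemma hm_cross (hm : 3 ≤ m) (F : SimpleGraph (Fin (m-1) ⊕ (Fin m × Fin 3))) [DecidableRel F.Adj] (hFle : F ≤ Hm m)
    (hstruct : ∀ c : F.ConnectedComponent,
      (Nat.card c.supp = 2 ∧ ∀ v ∈ c.supp, F.degree v = 1) ∨
      (5 ≤ Nat.card c.supp ∧ ∀ v ∈ c.supp, F.degree v = 2))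
    (j : Fin m) : ∃ a k, F.Adj (Sum.inl a) (Sum.inr (j,k)) := by
  classical
  by_contra hno
  push_neg at hno
  set T3 : Set (Fin (m-1) ⊕ (Fin m × Fin 3)) := {w | ∃ k : Fin 3, w = Sum.inr (j, k)} with hT3
  have hT3card : T3.ncard = 3 := by
    have h1 : T3 = (fun k : Fin 3 => (Sum.inr (j,k) : Fin (m-1) ⊕ (Fin m × Fin 3))) ''
        Set.univ := by
      ext w
      simp only [hT3, Set.mem_setOf_eq, Set.image_univ, Set.mem_range, eq_comm]
    rw [h1, Set.ncard_image_of_injective _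
      (fun a b hab => by simpa using congrArg (Sum.elim (fun _ => a) Prod.snd) hab),
      Set.ncard_univ]
    simp
  have hwalk : ∀ (v w : Fin (m-1) ⊕ (Fin m × Fin 3)) (p : F.Walk v w), v ∈ T3 → w ∈ T3 := by
    intro v w p
    induction p with
    | nil => exact id
    | @cons u x y h p ih =>
      rintro ⟨k, rfl⟩
      apply ih
      cases x with
      | inl a => exact absurd h.symm (hno a k)
      | inr q =>
        have hq : j = q.1 := (hm_adj_iff.1 (hFle h)).2 (j,k) q rfl rfl
        exact ⟨q.2, by rw [hq]⟩
  have hsuppsub : ∀ k : Fin 3, (F.connectedComponentMk (Sum.inr (j,k))).supp ⊆ T3 := by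
    intro k w hw
    rw [ConnectedComponent.mem_supp_iff] at hw
    obtain ⟨p⟩ := (ConnectedComponent.eq.mp hw).symm
    exact hwalk _ _ p ⟨k, rfl⟩
  have hsc : ∀ k : Fin 3, ((F.connectedComponentMk (Sum.inr (j,k))).supp).ncard = 2 := by
    intro k
    have hle : ((F.connectedComponentMk (Sum.inr (j,k))).supp).ncard ≤ 3 := by
      calc _ ≤ T3.ncard := Set.ncard_le_ncard (hsuppsub k) (Set.toFinite _)
        _ = 3 := hT3card
    rcases hstruct (F.connectedComponentMk (Sum.inr (j,k))) with ⟨h2, _⟩ | ⟨h5, _⟩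
    · rw [← Nat.card_coe_set_eq]; exact h2
    · rw [← Nat.card_coe_set_eq] at hle; omega
  have hpair : ∀ k k' : Fin 3,
      F.connectedComponentMk (Sum.inr (j,k)) = F.connectedComponentMk (Sum.inr (j,k')) := by
    intro k k'
    by_contra hne
    have hdisj : Disjoint (F.connectedComponentMk (Sum.inr (j,k))).supp
        (F.connectedComponentMk (Sum.inr (j,k'))).supp := by
      rw [Set.disjoint_left]
      intro x hx hx'
      rw [ConnectedComponent.mem_supp_iff] at hx hx'
      exact hne (hx ▸ hx' ▸ rfl)
    have hu := Set.ncard_union_eq hdisj (Set.toFinite _) (Set.toFinite _)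
    have hsub : (F.connectedComponentMk (Sum.inr (j,k))).supp ∪
        (F.connectedComponentMk (Sum.inr (j,k'))).supp ⊆ T3 :=
      Set.union_subset (hsuppsub k) (hsuppsub k')
    have hle := Set.ncard_le_ncard hsub (Set.toFinite _)
    rw [hu, hsc k, hsc k', hT3card] at hle
    omega
  have hTsub : T3 ⊆ (F.connectedComponentMk (Sum.inr (j,0))).supp := by
    rintro w ⟨k, rfl⟩
    rw [ConnectedComponent.mem_supp_iff]
    exact hpair k 0
  have hfin := Set.ncard_le_ncard hTsub (Set.toFinite _)
  rw [hT3card, hsc 0] at hfin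
  omega

private lemma hm_cset_two (F : SimpleGraph (Fin (m-1) ⊕ (Fin m × Fin 3))) [DecidableRel F.Adj]
    (hFle : F ≤ Hm m)
    (hstruct : ∀ c : F.ConnectedComponent,
      (Nat.card c.supp = 2 ∧ ∀ v ∈ c.supp, F.degree v = 1) ∨
      (5 ≤ Nat.card c.supp ∧ ∀ v ∈ c.supp, F.degree v = 2))
    (j : Fin m) (a : Fin (m-1)) (k0 : Fin 3)
    (hadj : F.Adj (Sum.inl a) (Sum.inr (j,k0))) (hdeg : F.degree (Sum.inl a) = 2) :
    2 ≤ (univ.filter (fun q : Fin (m-1) × Fin 3 =>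
      F.degree (Sum.inl q.1) = 2 ∧ F.Adj (Sum.inl q.1) (Sum.inr (j, q.2)))).card := by
  classical
  set C := F.connectedComponentMk (Sum.inl a) with hC
  have hC2 : ∀ w ∈ C.supp, F.degree w = 2 := by
    intro w hw
    rcases hstruct C with ⟨_, h1⟩ | ⟨_, h2⟩
    · have := h1 (Sum.inl a) rfl; omega
    · exact h2 w hw
  set G3 : SimpleGraph (Fin 3) :=
    { Adj := fun k k' => F.Adj (Sum.inr (j,k)) (Sum.inr (j,k')) ∧
        Sum.inr (j,k) ∈ C.supp ∧ Sum.inr (j,k') ∈ C.supp,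
      symm := ⟨fun k k' ⟨h1, h2, h3⟩ => ⟨h1.symm, h3, h2⟩⟩,
      loopless := ⟨fun k h => F.irrefl h.1⟩ } with hG3
  haveI : DecidableRel G3.Adj := Classical.decRel _
  set X : Finset (Fin 3) := univ.filter (fun k => Sum.inr (j,k) ∈ C.supp) with hX
  set crossk : Fin 3 → ℕ :=
    fun k => (univ.filter (fun a' : Fin (m-1) => F.Adj (Sum.inr (j,k)) (Sum.inl a'))).card
    with hcrossk
  -- membership closure: adjacency to a supp member puts you in supp
  have hmemC : ∀ (v w : Fin (m-1) ⊕ (Fin m × Fin 3)), v ∈ C.supp → F.Adj v w → w ∈ C.supp := by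
    intro v w hv hvw
    rw [ConnectedComponent.mem_supp_iff] at hv ⊢
    rw [← hv]
    exact (ConnectedComponent.connectedComponentMk_eq_of_adj hvw).symm
  -- degree decomposition for k ∈ X
  have hdecomp : ∀ k ∈ X, F.degree (Sum.inr (j,k)) = G3.degree k + crossk k := by
    intro k hk
    rw [hX, mem_filter] at hk
    have hsupp := hk.2
    rw [← card_neighborFinset_eq_degree, neighborFinset_eq_filter, card_filter]
    rw [Fintype.sum_sum_type]
    have h2 : (∑ p : Fin m × Fin 3,
        if F.Adj (Sum.inr (j,k)) (Sum.inr p) then 1 else 0) = G3.degree k := by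
      rw [Fintype.sum_prod_type]
      rw [Finset.sum_eq_single_of_mem j (mem_univ j)]
      · rw [← card_neighborFinset_eq_degree, neighborFinset_eq_filter, card_filter]
        apply Finset.sum_congr rfl
        intro k' _
        congr 1
        apply propext
        constructor
        · intro hF
          exact ⟨hF, hsupp, hmemC _ _ hsupp hF⟩
        · intro hG
          exact hG.1
      · intro j' _ hj'
        apply Finset.sum_eq_zero
        intro k' _
        rw [if_neg]
        intro hF
        exact hj' ((hm_adj_iff.1 (hFle hF)).2 (j,k) (j',k') rfl rfl).symm
    have h1 : (∑ a' : Fin (m-1),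
        if F.Adj (Sum.inr (j,k)) (Sum.inl a') then 1 else 0) = crossk k := by
      simp only [hcrossk]
      rw [card_filter]
    rw [h1, h2]
    ring
  -- handshake for G3
  have hsumdeg : ∑ k ∈ X, G3.degree k = 2 * G3.edgeFinset.card := by
    rw [← sum_degrees_eq_twice_card_edges]
    apply Finset.sum_subset (Finset.subset_univ X)
    intro k _ hk
    rw [hX, mem_filter] at hk
    push_neg at hk
    rw [← card_neighborFinset_eq_degree, neighborFinset_eq_filter]
    rw [Finset.card_eq_zero, Finset.filter_eq_empty_iff]
    intro k' _
    rw [hG3]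
    intro hadj'
    exact hk (mem_univ k) hadj'.2.1
  -- summing degrees over X
  have hsum2 : ∑ k ∈ X, F.degree (Sum.inr (j,k)) = 2 * X.card := by
    rw [Finset.sum_congr rfl (fun k hk => hC2 (Sum.inr (j,k)) (by
      rw [hX, mem_filter] at hk; exact hk.2))]
    rw [Finset.sum_const, smul_eq_mul]
    ring
  have heq : 2 * X.card = 2 * G3.edgeFinset.card + ∑ k ∈ X, crossk k := by
    rw [← hsum2, ← hsumdeg, ← Finset.sum_add_distrib]
    exact Finset.sum_congr rfl hdecomp
  -- k0 ∈ X and crossk k0 ≥ 1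
  have hk0X : k0 ∈ X := by
    rw [hX, mem_filter]
    exact ⟨mem_univ _, hmemC _ _ rfl hadj⟩
  have hk0pos : 1 ≤ crossk k0 := by
    rw [hcrossk]
    apply Finset.card_pos.mpr
    exact ⟨a, by simp [hadj.symm]⟩
  have hcr2 : 2 ≤ ∑ k ∈ X, crossk k := by
    have h1le : 1 ≤ ∑ k ∈ X, crossk k :=
      le_trans hk0pos (Finset.single_le_sum (fun _ _ => Nat.zero_le _) hk0X)
    omega
  -- inject pairs into the target set
  set pairs : Finset (Fin 3 × Fin (m-1)) := univ.filter (fun q =>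
    Sum.inr (j,q.1) ∈ C.supp ∧ F.Adj (Sum.inr (j,q.1)) (Sum.inl q.2)) with hpairs
  have hpc : pairs.card = ∑ k ∈ X, crossk k := by
    rw [hpairs, card_filter, Fintype.sum_prod_type, hX, Finset.sum_filter]
    apply Finset.sum_congr rfl
    intro k _
    by_cases hk : Sum.inr (j,k) ∈ C.supp
    · rw [if_pos hk]
      simp only [hcrossk]
      rw [card_filter]
      apply Finset.sum_congr rfl
      intro a' _
      simp [hk]
    · rw [if_neg hk]
      apply Finset.sum_eq_zero
      intro a' _
      simp [hk]
  have hinj : pairs.card ≤ (univ.filter (fun q : Fin (m-1) × Fin 3 =>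
      F.degree (Sum.inl q.1) = 2 ∧ F.Adj (Sum.inl q.1) (Sum.inr (j, q.2)))).card := by
    apply Finset.card_le_card_of_injOn (fun q => (q.2, q.1))
    · intro q hq
      rw [hpairs, Finset.mem_coe, mem_filter] at hq
      rw [Finset.mem_coe, mem_filter]
      refine ⟨mem_univ _, ?_, hq.2.2.symm⟩
      exact hC2 _ (hmemC _ _ hq.2.1 hq.2.2)
    · intro q _ q' _ h
      simpa [Prod.ext_iff, and_comm] using h
  omega

private lemma hm_count (hm : 3 ≤ m) (F : SimpleGraph (Fin (m-1) ⊕ (Fin m × Fin 3))) [DecidableRel F.Adj]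
    (hdeg12 : ∀ v, F.degree v = 1 ∨ F.degree v = 2)
    (hlow : ∀ j : Fin m, 2 ≤
      2 * (univ.filter (fun a : Fin (m-1) => F.degree (Sum.inl a) = 1 ∧
            ∃ k, F.Adj (Sum.inl a) (Sum.inr (j,k)))).card +
      (univ.filter (fun q : Fin (m-1) × Fin 3 => F.degree (Sum.inl q.1) = 2 ∧
            F.Adj (Sum.inl q.1) (Sum.inr (j, q.2)))).card) : False := by
  classical
  have hpera : ∀ a : Fin (m-1),
      (∑ j : Fin m, (2 * (if (F.degree (Sum.inl a) = 1 ∧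
          ∃ k, F.Adj (Sum.inl a) (Sum.inr (j,k))) then 1 else 0) +
        ∑ k : Fin 3, if (F.degree (Sum.inl a) = 2 ∧
          F.Adj (Sum.inl a) (Sum.inr (j,k))) then 1 else 0)) ≤ 2 := by
    intro a
    rcases hdeg12 (Sum.inl a) with hd | hd
    · have hz : ∀ j : Fin m, (∑ k : Fin 3, if (F.degree (Sum.inl a) = 2 ∧
          F.Adj (Sum.inl a) (Sum.inr (j,k))) then 1 else 0) = 0 := by
        intro j
        apply Finset.sum_eq_zero
        intro k _
        rw [if_neg]
        rintro ⟨h2, _⟩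
        omega
      calc (∑ j : Fin m, (2 * (if (F.degree (Sum.inl a) = 1 ∧
              ∃ k, F.Adj (Sum.inl a) (Sum.inr (j,k))) then 1 else 0) +
            ∑ k : Fin 3, if (F.degree (Sum.inl a) = 2 ∧
              F.Adj (Sum.inl a) (Sum.inr (j,k))) then 1 else 0))
          = 2 * ∑ j : Fin m, (if (F.degree (Sum.inl a) = 1 ∧
              ∃ k, F.Adj (Sum.inl a) (Sum.inr (j,k))) then 1 else 0) := by
            rw [Finset.mul_sum]
            apply Finset.sum_congr rfl
            intro j _
            rw [hz j, add_zero]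
        _ ≤ 2 * 1 := by
            apply Nat.mul_le_mul_left
            rw [← card_filter]
            apply Finset.card_le_one.mpr
            intro j hj j' hj'
            rw [mem_filter] at hj hj'
            obtain ⟨_, _, k, hk⟩ := hj
            obtain ⟨_, _, k', hk'⟩ := hj'
            have h1 : (F.neighborFinset (Sum.inl a)).card = 1 := by
              rw [card_neighborFinset_eq_degree, hd]
            obtain ⟨b, hb⟩ := Finset.card_eq_one.mp h1
            have m1 : (Sum.inr (j,k) : Fin (m-1) ⊕ (Fin m × Fin 3)) ∈
                F.neighborFinset (Sum.inl a) := by rwa [mem_neighborFinset]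
            have m2 : (Sum.inr (j',k') : Fin (m-1) ⊕ (Fin m × Fin 3)) ∈
                F.neighborFinset (Sum.inl a) := by rwa [mem_neighborFinset]
            rw [hb, Finset.mem_singleton] at m1 m2
            have := m1.trans m2.symm
            simp only [Sum.inr.injEq, Prod.mk.injEq] at this
            exact this.1
        _ = 2 := by norm_num
    · have hz : ∀ j : Fin m, (if (F.degree (Sum.inl a) = 1 ∧
          ∃ k, F.Adj (Sum.inl a) (Sum.inr (j,k))) then 1 else 0) = 0 := by
        intro j
        rw [if_neg]
        rintro ⟨h1, _⟩
        omega
      have step1 : (∑ j : Fin m, (2 * (if (F.degree (Sum.inl a) = 1 ∧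
              ∃ k, F.Adj (Sum.inl a) (Sum.inr (j,k))) then 1 else 0) +
            ∑ k : Fin 3, if (F.degree (Sum.inl a) = 2 ∧
              F.Adj (Sum.inl a) (Sum.inr (j,k))) then 1 else 0))
          = (univ.filter (fun q : Fin m × Fin 3 =>
              F.Adj (Sum.inl a) (Sum.inr q))).card := by
        rw [card_filter, Fintype.sum_prod_type]
        apply Finset.sum_congr rfl
        intro j _
        rw [hz j, mul_zero, zero_add]
        apply Finset.sum_congr rfl
        intro k _
        simp [hd]
      rw [step1, ← hd]
      rw [← card_neighborFinset_eq_degree]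
      apply Finset.card_le_card_of_injOn (fun q => Sum.inr q)
      · intro q hq
        rw [Finset.mem_coe, mem_filter] at hq
        rw [Finset.mem_coe, mem_neighborFinset]
        exact hq.2
      · intro q _ q' _ h
        exact Sum.inr_injective h
  -- assembly
  have htot : 2 * m ≤ 2 * (m - 1) := by
    calc 2 * m = ∑ _j : Fin m, 2 := by simp [mul_comm]
      _ ≤ ∑ j : Fin m,
          (2 * (univ.filter (fun a : Fin (m-1) => F.degree (Sum.inl a) = 1 ∧
            ∃ k, F.Adj (Sum.inl a) (Sum.inr (j,k)))).card +
          (univ.filter (fun q : Fin (m-1) × Fin 3 => F.degree (Sum.inl q.1) = 2 ∧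
            F.Adj (Sum.inl q.1) (Sum.inr (j, q.2)))).card) :=
          Finset.sum_le_sum (fun j _ => hlow j)
      _ = ∑ a : Fin (m-1), (∑ j : Fin m, (2 * (if (F.degree (Sum.inl a) = 1 ∧
            ∃ k, F.Adj (Sum.inl a) (Sum.inr (j,k))) then 1 else 0) +
          ∑ k : Fin 3, if (F.degree (Sum.inl a) = 2 ∧
            F.Adj (Sum.inl a) (Sum.inr (j,k))) then 1 else 0)) := by
          rw [Finset.sum_comm]
          apply Finset.sum_congr rfl
          intro j _
          rw [Finset.sum_add_distrib, ← Finset.mul_sum, ← card_filter]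
          congr 1
          rw [card_filter, Fintype.sum_prod_type]
      _ ≤ ∑ _a : Fin (m-1), 2 := Finset.sum_le_sum (fun a _ => hpera a)
      _ = 2 * (m - 1) := by simp [mul_comm]
  omega


private lemma no_factor (hm : 3 ≤ m) : ¬ HasK2OddCycleFactor (Hm m) := by
  rintro ⟨F, hFle, hcomp⟩
  classical
  haveI : DecidableRel F.Adj := Classical.decRel _
  have hstruct := comp_struct' hcomp
  have hdeg12 : ∀ v, F.degree v = 1 ∨ F.degree v = 2 := by
    intro v
    rcases hstruct (F.connectedComponentMk v) with ⟨_, h⟩ | ⟨_, h⟩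
    · exact Or.inl (h v rfl)
    · exact Or.inr (h v rfl)
  apply hm_count hm F hdeg12
  intro j
  obtain ⟨a, k, hak⟩ := hm_cross hm F hFle hstruct j
  rcases hdeg12 (Sum.inl a) with hd | hd
  · have h1 : 1 ≤ (Finset.univ.filter (fun a : Fin (m-1) => F.degree (Sum.inl a) = 1 ∧
        ∃ k, F.Adj (Sum.inl a) (Sum.inr (j,k)))).card := by
      apply Finset.card_pos.mpr
      exact ⟨a, by rw [Finset.mem_filter]; exact ⟨Finset.mem_univ _, hd, ⟨k, hak⟩⟩⟩
    omega
  · have h2 := hm_cset_two F hFle hstruct j a k hak hd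
    omega

end AuxHm

theorem stmt16 (m : ℕ) (hm : 3 ≤ m) :
    ¬ HasK2OddCycleFactor (Hm m) ∧
      isoToughness (Hm m) = (3 * (m : ℝ) - 1) / (m : ℝ) := by
  refine ⟨no_factor hm, ?_⟩
  obtain ⟨S₀, hS₀, hval⟩ := iso_mem hm
  have hbdd : ∀ x ∈ {x : ℝ | ∃ S : Set (Fin (m-1) ⊕ (Fin m × Fin 3)),
      2 ≤ isoCount (Hm m) S ∧ x = (S.ncard : ℝ) / (isoCount (Hm m) S : ℝ)},
      (3 * (m : ℝ) - 1) / (m : ℝ) ≤ x := by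
    rintro x ⟨S, hS, rfl⟩
    exact iso_lower hm S hS
  have hmem : (3 * (m : ℝ) - 1) / (m : ℝ) ∈ {x : ℝ | ∃ S : Set (Fin (m-1) ⊕ (Fin m × Fin 3)),
      2 ≤ isoCount (Hm m) S ∧ x = (S.ncard : ℝ) / (isoCount (Hm m) S : ℝ)} :=
    ⟨S₀, hS₀, hval⟩
  apply le_antisymm
  · exact csInf_le ⟨_, hbdd⟩ hmem
  · exact le_csInf ⟨_, hmem⟩ hbdd
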